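/- Let $n \in \mathbb{S}^2$, $b s \neq 0$ and $4cs - b \neq 0$. Define $\mathcal{H}_n$ on $\mathbb{S}^3_0$ as above, and define $\mathcal{G}(Q) = \tfrac{1}{bs}\big(Q - (nn^TQ + Qnn^T) + \tfrac{2}{3}(Q : nn^T)I\big) + \tfrac{4b + 2cs}{bs(4cs - b)}(Q : nn^T)\big(nn^T - \tfrac{1}{3}I\big)$. Then for every $Q \in (\mathrm{Ker}\,\mathcal{H}_n)^{\perp} \cap \mathbb{S}^3_0$ one has $\mathcal{G}(\mathcal{H}_n(Q)) = Q$ and $\mathcal{H}_n(\mathcal{G}(Q)) = Q$; in particular, $\mathcal{H}_n$ is a bijection on $(\mathrm{Ker}\,\mathcal{H}_n)^{\perp}$. -/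

import Mathlib

open Matrix BigOperators

noncomputable section

abbrev M3 := Matrix (Fin 3) (Fin 3) ℝ

def frob (A B : M3) : ℝ := ∑ i, ∑ j, A i j * B i j

def Hn (b c s : ℝ) (n : Fin 3 → ℝ) (Q : M3) : M3 :=
  (b * s) • (Q - (vecMulVec n n * Q + Q * vecMulVec n n)
      + (2/3 * frob Q (vecMulVec n n)) • (1 : M3))
    + (2 * c * s ^ 2 * frob Q (vecMulVec n n)) • (vecMulVec n n - (1/3 : ℝ) • (1 : M3))

/-- The candidate inverse `𝒢` of `ℋₙ` on `(Ker ℋₙ)^⊥`. -/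
def Ginv (b c s : ℝ) (n : Fin 3 → ℝ) (Q : M3) : M3 :=
  (1 / (b * s)) • (Q - (vecMulVec n n * Q + Q * vecMulVec n n)
      + (2/3 * frob Q (vecMulVec n n)) • (1 : M3))
    + ((4 * b + 2 * c * s) / (b * s * (4 * c * s - b)) * frob Q (vecMulVec n n)) •
        (vecMulVec n n - (1/3 : ℝ) • (1 : M3))

/-- `(Ker ℋₙ)^⊥ ∩ 𝕊³₀`. -/
def kerPerp (n : Fin 3 → ℝ) : Set M3 :=
  {Q | Qᵀ = Q ∧ Q.trace = 0 ∧ ∀ m : Fin 3 → ℝ, (∑ i, m i * n i) = 0 →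
    frob Q (vecMulVec n m + vecMulVec m n) = 0}

/-! ### Auxiliary lemmas -/

lemma frob_add_left' (A B C : M3) : frob (A + B) C = frob A C + frob B C := by
  simp [frob, add_mul, Finset.sum_add_distrib]

lemma frob_smul_left' (r : ℝ) (A C : M3) : frob (r • A) C = r * frob A C := by
  simp [frob, Finset.mul_sum, mul_assoc]

lemma hPP' (n : Fin 3 → ℝ) (hn : (∑ i, n i * n i) = 1) :
    (vecMulVec n n) * (vecMulVec n n) = vecMulVec n n := by
  simp only [Fin.sum_univ_three] at hn
  ext i j
  simp only [mul_apply, vecMulVec_apply, Fin.sum_univ_three]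
  linear_combination (n i * n j) * hn

lemma frobPP' (n : Fin 3 → ℝ) (hn : (∑ i, n i * n i) = 1) :
    frob (vecMulVec n n) (vecMulVec n n) = 1 := by
  simp only [frob, vecMulVec_apply, Fin.sum_univ_three] at *
  linear_combination (n 0 * n 0 + n 1 * n 1 + n 2 * n 2 + 1) * hn

lemma frob1P' (n : Fin 3 → ℝ) (hn : (∑ i, n i * n i) = 1) :
    frob (1 : M3) (vecMulVec n n) = 1 := by
  simp only [frob, vecMulVec_apply, Matrix.one_apply, Fin.sum_univ_three] at *
  norm_num [Fin.ext_iff]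
  linear_combination hn

lemma traceP' (n : Fin 3 → ℝ) (hn : (∑ i, n i * n i) = 1) :
    (vecMulVec n n).trace = 1 := by
  simp only [trace, diag, vecMulVec_apply, Fin.sum_univ_three] at *
  linear_combination hn

lemma Pt' (n : Fin 3 → ℝ) : (vecMulVec n n)ᵀ = vecMulVec n n := by
  ext i j; simp [vecMulVec_apply, mul_comm]

lemma frobP_perp' (n : Fin 3 → ℝ) (hn : (∑ i, n i * n i) = 1) (m : Fin 3 → ℝ)
    (hm : (∑ i, m i * n i) = 0) :
    frob (vecMulVec n n) (vecMulVec n m + vecMulVec m n) = 0 := by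
  simp only [frob, vecMulVec_apply, Matrix.add_apply, Fin.sum_univ_three] at *
  linear_combination 2 * (m 0 * n 0 + m 1 * n 1 + m 2 * n 2) * hn + 2 * hm

lemma frob1_perp' (n : Fin 3 → ℝ) (m : Fin 3 → ℝ) (hm : (∑ i, m i * n i) = 0) :
    frob (1 : M3) (vecMulVec n m + vecMulVec m n) = 0 := by
  simp only [frob, vecMulVec_apply, Matrix.one_apply, Matrix.add_apply,
    Fin.sum_univ_three] at *
  norm_num [Fin.ext_iff]
  linear_combination 2 * hm

lemma key' (n : Fin 3 → ℝ) (hn : (∑ i, n i * n i) = 1) (Q : M3) (hQ : Q ∈ kerPerp n) :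
    ∀ j, Q j 0 * n 0 + Q j 1 * n 1 + Q j 2 * n 2 = frob Q (vecMulVec n n) * n j := by
  obtain ⟨hsym', htr, hker⟩ := hQ
  have hsym : ∀ i j, Q j i = Q i j := fun i j => congrFun (congrFun hsym' i) j
  have e10 : Q 1 0 = Q 0 1 := hsym 0 1
  have e20 : Q 2 0 = Q 0 2 := hsym 0 2
  have e21 : Q 2 1 = Q 1 2 := hsym 1 2
  set q := frob Q (vecMulVec n n) with hq
  set m : Fin 3 → ℝ := fun i => (Q i 0 * n 0 + Q i 1 * n 1 + Q i 2 * n 2) - q * n i with hm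
  simp only [Fin.sum_univ_three] at hn
  have hqe : q = Q 0 0 * (n 0 * n 0) + Q 0 1 * (n 0 * n 1) + Q 0 2 * (n 0 * n 2)
      + Q 1 0 * (n 1 * n 0) + Q 1 1 * (n 1 * n 1) + Q 1 2 * (n 1 * n 2)
      + Q 2 0 * (n 2 * n 0) + Q 2 1 * (n 2 * n 1) + Q 2 2 * (n 2 * n 2) := by
    rw [hq]; simp only [frob, vecMulVec_apply, Fin.sum_univ_three]; ring
  have hmn : (∑ i, m i * n i) = 0 := by
    simp only [Fin.sum_univ_three, hm]
    linear_combination -hqe - q * hn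
  have h0 := hker m hmn
  simp only [frob, vecMulVec_apply, Fin.sum_univ_three, Matrix.add_apply, hm] at h0
  simp only [Fin.sum_univ_three, hm] at hmn
  rw [e10, e20, e21] at h0 hmn
  have hmm : m 0 * m 0 + m 1 * m 1 + m 2 * m 2 = 0 := by
    simp only [hm]
    rw [e10, e20, e21]
    linear_combination h0/2 - q * hmn
  have h1 := mul_self_nonneg (m 0)
  have h2 := mul_self_nonneg (m 1)
  have h3 := mul_self_nonneg (m 2)
  have z0 : m 0 = 0 := mul_self_eq_zero.mp (le_antisymm (by linarith only [hmm, h2, h3]) h1)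
  have z1 : m 1 = 0 := mul_self_eq_zero.mp (le_antisymm (by linarith only [hmm, h1, h3]) h2)
  have z2 : m 2 = 0 := mul_self_eq_zero.mp (le_antisymm (by linarith only [hmm, h1, h2]) h3)
  simp only [hm] at z0 z1 z2
  intro j
  fin_cases j
  · exact (by linarith only [z0] : Q 0 0 * n 0 + Q 0 1 * n 1 + Q 0 2 * n 2 = q * n 0)
  · exact (by linarith only [z1] : Q 1 0 * n 0 + Q 1 1 * n 1 + Q 1 2 * n 2 = q * n 1)
  · exact (by linarith only [z2] : Q 2 0 * n 0 + Q 2 1 * n 1 + Q 2 2 * n 2 = q * n 2)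

lemma hQP' (n : Fin 3 → ℝ) (hn : (∑ i, n i * n i) = 1) (Q : M3) (hQ : Q ∈ kerPerp n) :
    Q * vecMulVec n n = frob Q (vecMulVec n n) • vecMulVec n n := by
  have k := key' n hn Q hQ
  ext i j
  simp only [mul_apply, vecMulVec_apply, Matrix.smul_apply, smul_eq_mul, Fin.sum_univ_three]
  linear_combination n j * k i

lemma hPQ' (n : Fin 3 → ℝ) (hn : (∑ i, n i * n i) = 1) (Q : M3) (hQ : Q ∈ kerPerp n) :
    vecMulVec n n * Q = frob Q (vecMulVec n n) • vecMulVec n n := by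
  have k := key' n hn Q hQ
  have hsym : ∀ i j, Q j i = Q i j := fun i j => congrFun (congrFun hQ.1 i) j
  ext i j
  simp only [mul_apply, vecMulVec_apply, Matrix.smul_apply, smul_eq_mul, Fin.sum_univ_three]
  rw [hsym j 0, hsym j 1, hsym j 2]
  linear_combination n i * k j

lemma mem_combo' (n : Fin 3 → ℝ) (hn : (∑ i, n i * n i) = 1) (Q : M3) (hQ : Q ∈ kerPerp n)
    (a β γ : ℝ) (h : β + 3 * γ = 0) :
    a • Q + β • vecMulVec n n + γ • (1 : M3) ∈ kerPerp n := by
  refine ⟨?_, ?_, ?_⟩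
  · simp [transpose_add, transpose_smul, hQ.1, Pt' n]
  · simp only [trace_add, trace_smul, hQ.2.1, traceP' n hn, trace_one, smul_eq_mul]
    simp only [Fintype.card_fin, Nat.cast_ofNat]
    linarith
  · intro m hm
    rw [frob_add_left', frob_add_left', frob_smul_left', frob_smul_left', frob_smul_left',
      hQ.2.2 m hm, frobP_perp' n hn m hm, frob1_perp' n m hm]
    ring

lemma hH' (b c s : ℝ) (n : Fin 3 → ℝ) (hn : (∑ i, n i * n i) = 1) (Q : M3)
    (hQ : Q ∈ kerPerp n) :
    Hn b c s n Q = (b * s) • Q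
      + (2 * c * s ^ 2 * frob Q (vecMulVec n n) - 2 * b * s * frob Q (vecMulVec n n)) •
          vecMulVec n n
      + (2/3 * (b * s) * frob Q (vecMulVec n n) - 2/3 * c * s ^ 2 * frob Q (vecMulVec n n)) •
          (1 : M3) := by
  rw [Hn, hPQ' n hn Q hQ, hQP' n hn Q hQ]
  module

lemma hG' (b c s : ℝ) (n : Fin 3 → ℝ) (hn : (∑ i, n i * n i) = 1) (Q : M3)
    (hQ : Q ∈ kerPerp n) :
    Ginv b c s n Q = (1 / (b * s)) • Q
      + ((4 * b + 2 * c * s) / (b * s * (4 * c * s - b)) * frob Q (vecMulVec n n)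
          - 2 * (1 / (b * s)) * frob Q (vecMulVec n n)) • vecMulVec n n
      + ((1 / (b * s)) * (2/3 * frob Q (vecMulVec n n))
          - (4 * b + 2 * c * s) / (b * s * (4 * c * s - b)) * frob Q (vecMulVec n n) / 3) •
          (1 : M3) := by
  rw [Ginv, hPQ' n hn Q hQ, hQP' n hn Q hQ]
  module

lemma frob_combo' (n : Fin 3 → ℝ) (hn : (∑ i, n i * n i) = 1) (Q : M3) (a β γ : ℝ) :
    frob (a • Q + β • vecMulVec n n + γ • (1 : M3)) (vecMulVec n n)
      = a * frob Q (vecMulVec n n) + β + γ := by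
  rw [frob_add_left', frob_add_left', frob_smul_left', frob_smul_left', frob_smul_left',
    frobPP' n hn, frob1P' n hn]
  ring

lemma mulP_combo' (n : Fin 3 → ℝ) (hn : (∑ i, n i * n i) = 1) (Q : M3) (hQ : Q ∈ kerPerp n)
    (a β γ : ℝ) :
    vecMulVec n n * (a • Q + β • vecMulVec n n + γ • (1 : M3))
      = (a * frob Q (vecMulVec n n) + β + γ) • vecMulVec n n := by
  rw [mul_add, mul_add, Matrix.mul_smul, Matrix.mul_smul, Matrix.mul_smul,
    hPQ' n hn Q hQ, hPP' n hn, mul_one]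
  module

lemma Pmul_combo' (n : Fin 3 → ℝ) (hn : (∑ i, n i * n i) = 1) (Q : M3) (hQ : Q ∈ kerPerp n)
    (a β γ : ℝ) :
    (a • Q + β • vecMulVec n n + γ • (1 : M3)) * vecMulVec n n
      = (a * frob Q (vecMulVec n n) + β + γ) • vecMulVec n n := by
  rw [add_mul, add_mul, Matrix.smul_mul, Matrix.smul_mul, Matrix.smul_mul,
    hQP' n hn Q hQ, hPP' n hn, one_mul]
  module

set_option maxHeartbeats 2000000 in
/-- `𝒢` inverts `ℋₙ` on `(Ker ℋₙ)^⊥`; in particular `ℋₙ` is a bijection on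
`(Ker ℋₙ)^⊥`. -/
theorem stmt5 (b c s : ℝ) (hbs : b * s ≠ 0) (h4 : 4 * c * s - b ≠ 0)
    (n : Fin 3 → ℝ) (hn : (∑ i, n i * n i) = 1) :
    (∀ Q ∈ kerPerp n, Ginv b c s n (Hn b c s n Q) = Q ∧ Hn b c s n (Ginv b c s n Q) = Q) ∧
    Set.BijOn (Hn b c s n) (kerPerp n) (kerPerp n) := by
  have mapsH : ∀ Q ∈ kerPerp n, Hn b c s n Q ∈ kerPerp n := by
    intro Q hQ
    rw [hH' b c s n hn Q hQ]
    exact mem_combo' n hn Q hQ _ _ _ (by ring)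
  have mapsG : ∀ Q ∈ kerPerp n, Ginv b c s n Q ∈ kerPerp n := by
    intro Q hQ
    rw [hG' b c s n hn Q hQ]
    exact mem_combo' n hn Q hQ _ _ _ (by ring)
  have main : ∀ Q ∈ kerPerp n,
      Ginv b c s n (Hn b c s n Q) = Q ∧ Hn b c s n (Ginv b c s n Q) = Q := by
    intro Q hQ
    have hb : b ≠ 0 := left_ne_zero_of_mul hbs
    have hs : s ≠ 0 := right_ne_zero_of_mul hbs
    have hD1 : s * c * 4 - b ≠ 0 := fun h => h4 (by linear_combination h)
    have hD2 : s * 4 * c - b ≠ 0 := fun h => h4 (by linear_combination h)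
    constructor
    · rw [hH' b c s n hn Q hQ, Ginv, frob_combo' n hn Q, mulP_combo' n hn Q hQ,
        Pmul_combo' n hn Q hQ]
      match_scalars <;> field_simp <;> ring
    · rw [hG' b c s n hn Q hQ, Hn, frob_combo' n hn Q, mulP_combo' n hn Q hQ,
        Pmul_combo' n hn Q hQ]
      match_scalars <;> field_simp <;> ring
  refine ⟨main, mapsH, ?_, ?_⟩
  · intro x hx y hy h
    have hx' := (main x hx).1
    rw [h, (main y hy).1] at hx'
    exact hx'.symm
  · intro Q hQ
    exact ⟨Ginv b c s n Q, mapsG Q hQ, (main Q hQ).2⟩
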